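/- Let p be a prime and S ⊆ ℕ be p-divisible (pr ∈ S implies r ∈ S). For n ∈ ℕ let t_S(n) be the number of divisors of n in S, e_{S,p}(n) = Σ_{d|n, d∈S} ν_p(d), and f_{S,p}(n) = |{(r,j) : r ∈ S, j ≥ 1, rp^j | n}|. Then f_{S,p}(n) = ν_p(n)·t_S(n) − e_{S,p}(n), and in particular f_{S,p}(n) ≥ e_{S,p}(n). -/

import Mathlib

open scoped Classical

namespace PartArith

/-- `a_μ = ∏ i^{m_i(μ)}`, the product of the parts of `μ`. -/
def aNum {n : ℕ} (μ : Nat.Partition n) : ℕ := μ.parts.prod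

/-- `b_μ = ∏ m_i(μ)!`, the product of the factorials of the multiplicities of the parts. -/
def bNum {n : ℕ} (μ : Nat.Partition n) : ℕ :=
  ∏ i ∈ μ.parts.toFinset, (μ.parts.count i).factorial

/-- `t_S(n)`, the number of divisors of `n` lying in `S`. -/
noncomputable def tS (S : Set ℕ) (n : ℕ) : ℕ := (n.divisors.filter (· ∈ S)).card

/-- `e_{S,p}(n) = ∑_{d ∣ n, d ∈ S} ν_p(d)`. -/
noncomputable def eS (S : Set ℕ) (p n : ℕ) : ℕ :=
  ∑ d ∈ n.divisors.filter (· ∈ S), d.factorization p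

/-- `f_{S,p}(n) = |{(r, j) : r ∈ S, j ≥ 1, r·p^j ∣ n}|` (for `n ≥ 1` this set is finite and
contained in `divisors n × [1, n]`). -/
noncomputable def fS (S : Set ℕ) (p n : ℕ) : ℕ :=
  ((n.divisors ×ˢ Finset.Icc 1 n).filter fun rj => rj.1 ∈ S ∧ rj.1 * p ^ rj.2 ∣ n).card

/-- `S` is `p`-divisible: `p·r ∈ S` (for `r ≥ 1`) implies `r ∈ S`. -/
def PDivisible (S : Set ℕ) (p : ℕ) : Prop := ∀ r : ℕ, 1 ≤ r → p * r ∈ S → r ∈ S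

/-- `S` is `p`-closed: `d ∈ S` implies `p·d ∈ S`. -/
def PClosed (S : Set ℕ) (p : ℕ) : Prop := ∀ d ∈ S, p * d ∈ S

/-- The number of partitions of `n` with all parts in `S`. -/
noncomputable def pCount (S : Set ℕ) (n : ℕ) : ℕ :=
  Fintype.card {μ : Nat.Partition n // ∀ i ∈ μ.parts, i ∈ S}

/-- `a_{P(n,S)} = ∏_{μ ∈ P(n,S)} a_μ`. -/
noncomputable def aProd (S : Set ℕ) (n : ℕ) : ℕ :=
  ∏ μ : {μ : Nat.Partition n // ∀ i ∈ μ.parts, i ∈ S}, aNum μ.1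

/-- `b_{P(n,S)} = ∏_{μ ∈ P(n,S)} b_μ`. -/
noncomputable def bProd (S : Set ℕ) (n : ℕ) : ℕ :=
  ∏ μ : {μ : Nat.Partition n // ∀ i ∈ μ.parts, i ∈ S}, bNum μ.1


/-- **Proposition 4.2 (first part).** Let `p` be a prime and `S ⊆ ℕ` be `p`-divisible.  Then for
all `n ≥ 1`, `f_{S,p}(n) = ν_p(n)·t_S(n) − e_{S,p}(n)`, and in particular
`f_{S,p}(n) ≥ e_{S,p}(n)`. -/

lemma mem_of_pow_mul_mem {S : Set ℕ} {p : ℕ} (hp : p.Prime) (hdiv : PDivisible S p) :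
    ∀ j r : ℕ, 0 < r → p ^ j * r ∈ S → r ∈ S := by
  intro j
  induction j with
  | zero => intro r _ h; simpa using h
  | succ j ih =>
      intro r hr h
      apply hdiv r hr
      apply ih (p * r) (Nat.mul_pos hp.pos hr)
      rw [← mul_assoc, ← pow_succ]
      exact h

lemma filter_dvd_eq {p n r : ℕ} (hp : p.Prime) (hn : 0 < n) (hr : r ∣ n) :
    (Finset.Icc 1 n).filter (fun j => r * p ^ j ∣ n) =
      Finset.Icc 1 (n.factorization p - r.factorization p) := by
  have hn0 : n ≠ 0 := hn.ne'
  have hr0 : r ≠ 0 := fun h => by simp [h] at hr; omega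
  have hnr0 : n / r ≠ 0 := Nat.div_ne_zero_iff.mpr ⟨hr0, Nat.le_of_dvd hn hr⟩
  have ha : n.factorization p ≤ n :=
    le_trans (le_of_lt (Nat.lt_pow_self hp.one_lt))
      (Nat.le_of_dvd hn (Nat.ordProj_dvd n p))
  ext j
  simp only [Finset.mem_filter, Finset.mem_Icc]
  constructor
  · rintro ⟨⟨h1, _⟩, hdvd⟩
    refine ⟨h1, ?_⟩
    have : p ^ j ∣ n / r := (Nat.dvd_div_iff_mul_dvd hr).mpr hdvd
    have := (hp.pow_dvd_iff_le_factorization hnr0).mp this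
    rwa [Nat.factorization_div hr, Finsupp.tsub_apply] at this
  · rintro ⟨h1, h2⟩
    have hle : j ≤ (n / r).factorization p := by
      rwa [Nat.factorization_div hr, Finsupp.tsub_apply]
    have : p ^ j ∣ n / r := (hp.pow_dvd_iff_le_factorization hnr0).mpr hle
    have hdvd : r * p ^ j ∣ n := (Nat.dvd_div_iff_mul_dvd hr).mp this
    exact ⟨⟨h1, by omega⟩, hdvd⟩

theorem fS_eq_and_ge (S : Set ℕ) (p : ℕ) (hp : p.Prime) (hdiv : PDivisible S p)
    (n : ℕ) (hn : 0 < n) :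
    (fS S p n : ℤ) = n.factorization p * tS S n - eS S p n ∧ eS S p n ≤ fS S p n := by
  have hn0 : n ≠ 0 := hn.ne'
  set a := n.factorization p with ha_def
  have ha : a ≤ n :=
    le_trans (le_of_lt (Nat.lt_pow_self hp.one_lt))
      (Nat.le_of_dvd hn (Nat.ordProj_dvd n p))
  -- first: fS as a sum
  have h1 : fS S p n = ∑ r ∈ n.divisors.filter (· ∈ S), (a - r.factorization p) := by
    unfold fS
    rw [Finset.card_filter, Finset.sum_product, Finset.sum_filter]
    refine Finset.sum_congr rfl fun r hr => ?_
    have hrd : r ∣ n := (Nat.mem_divisors.mp hr).1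
    by_cases hrS : r ∈ S
    · simp only [hrS, true_and, if_true]
      rw [← Finset.card_filter, filter_dvd_eq hp hn hrd, Nat.card_Icc]
      omega
    · simp [hrS]
  -- eS as a card of pairs
  have h2 : eS S p n = ((n.divisors ×ˢ Finset.Icc 1 n).filter fun dj =>
      dj.1 ∈ S ∧ 1 ≤ dj.2 ∧ dj.2 ≤ dj.1.factorization p).card := by
    unfold eS
    rw [Finset.card_filter, Finset.sum_product, Finset.sum_filter]
    refine Finset.sum_congr rfl fun d hd => ?_
    have hdd : d ∣ n := (Nat.mem_divisors.mp hd).1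
    have hd0 : d ≠ 0 := fun h => by simp [h] at hdd; omega
    have hdle : d.factorization p ≤ a := by
      have := (Nat.factorization_le_iff_dvd hd0 hn0).mpr hdd
      exact this p
    by_cases hdS : d ∈ S
    · simp only [hdS, true_and, if_true]
      have : (Finset.Icc 1 n).filter (fun j => 1 ≤ j ∧ j ≤ d.factorization p) =
          Finset.Icc 1 (d.factorization p) := by
        ext j
        simp only [Finset.mem_filter, Finset.mem_Icc]
        omega
      rw [← Finset.card_filter, this, Nat.card_Icc]
      omega
    · simp [hdS]
  -- νp r ≤ a for r ∣ n
  have hle : ∀ r ∈ n.divisors.filter (· ∈ S), r.factorization p ≤ a := by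
    intro r hr
    have hrd : r ∣ n := (Nat.mem_divisors.mp (Finset.mem_filter.mp hr).1).1
    have hr0 : r ≠ 0 := fun h => by simp [h] at hrd; omega
    exact (Nat.factorization_le_iff_dvd hr0 hn0).mpr hrd p
  -- part 1
  have heq : (fS S p n : ℤ) = a * tS S n - eS S p n := by
    have hs : (∑ r ∈ n.divisors.filter (· ∈ S), ((a - r.factorization p : ℕ) : ℤ))
        = ∑ r ∈ n.divisors.filter (· ∈ S), ((a : ℤ) - (r.factorization p : ℤ)) :=
      Finset.sum_congr rfl fun r hr => by rw [Nat.cast_sub (hle r hr)]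
    rw [h1, Nat.cast_sum, hs, Finset.sum_sub_distrib, Finset.sum_const, nsmul_eq_mul, mul_comm]
    unfold eS tS
    push_cast
    ring
  refine ⟨heq, ?_⟩
  -- part 2: injection
  rw [h2]
  unfold fS
  apply Finset.card_le_card_of_injOn (fun dj => (dj.1 / p ^ dj.2, dj.2))
  · rintro ⟨d, j⟩ hdj
    simp only [Finset.mem_coe, Finset.mem_filter, Finset.mem_product, Finset.mem_Icc] at hdj ⊢
    obtain ⟨⟨hd, hj⟩, hdS, hj1, hjv⟩ := hdj
    have hdd : d ∣ n := (Nat.mem_divisors.mp hd).1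
    have hd0 : d ≠ 0 := fun h => by simp [h] at hdd; omega
    have hpj : p ^ j ∣ d := (hp.pow_dvd_iff_le_factorization hd0).mpr hjv
    have hmul : p ^ j * (d / p ^ j) = d := Nat.mul_div_cancel' hpj
    have hr0 : 0 < d / p ^ j :=
      Nat.div_pos (Nat.le_of_dvd (Nat.pos_of_ne_zero hd0) hpj) (pow_pos hp.pos j)
    refine ⟨⟨Nat.mem_divisors.mpr ⟨dvd_trans (Nat.div_dvd_of_dvd hpj) hdd, hn0⟩, hj⟩, ?_, ?_⟩
    · exact mem_of_pow_mul_mem hp hdiv j _ hr0 (by rwa [hmul])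
    · rw [Nat.div_mul_cancel hpj]; exact hdd
  · rintro ⟨d, j⟩ hdj ⟨d', j'⟩ hdj' heq2
    simp only [Finset.mem_coe, Finset.mem_filter, Finset.mem_product, Finset.mem_Icc] at hdj hdj'
    obtain ⟨⟨hd, _⟩, _, _, hjv⟩ := hdj
    obtain ⟨⟨hd', _⟩, _, _, hjv'⟩ := hdj'
    have hd0 : d ≠ 0 := fun h => by
      have := (Nat.mem_divisors.mp hd).1; simp [h] at this; omega
    have hd'0 : d' ≠ 0 := fun h => by
      have := (Nat.mem_divisors.mp hd').1; simp [h] at this; omega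
    have hpj : p ^ j ∣ d := (hp.pow_dvd_iff_le_factorization hd0).mpr hjv
    have hpj' : p ^ j' ∣ d' := (hp.pow_dvd_iff_le_factorization hd'0).mpr hjv'
    have h2' := congrArg Prod.snd heq2
    simp only at h2'
    subst h2'
    have h1' := congrArg Prod.fst heq2
    simp only at h1'
    have : d = d' := by
      rw [← Nat.mul_div_cancel' hpj, ← Nat.mul_div_cancel' hpj', h1']
    simp [this]


end PartArith
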